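/- Let C be a hyperelliptic smooth projective curve of genus g ≥ 2 over an algebraically closed field of characteristic ≠ 2, P ∈ C a point, and D = K_C + P. Then the cokernel of the multiplication map γ_1 : H^0(O_C(K_C)) ⊗ H^0(O_C(D)) → H^0(O_C(K_C + D)) has dimension g − 1. -/

import Mathlib

/-- The degree of a divisor (a finitely supported `ℤ`-valued function on points). -/
noncomputable def divDeg {Pt : Type} (D : Pt →₀ ℤ) : ℤ := D.sum fun _ n => n

/-- An abstract smooth projective curve over a field `k`, given by its function field `F`,
its set of closed points, a canonical divisor `K`, and the Riemann–Roch spaces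
`RR D = H^0(O_C(D)) = {f ∈ F | div f + D ≥ 0} ∪ {0}` inside `F`, subject to the standard
facts of the theory of curves (finite-dimensionality, monotonicity, multiplicativity,
`H^0(O_C) = k`, vanishing in negative degrees, the Riemann–Roch theorem and
`deg K = 2g − 2`). -/
structure SmoothProjCurve (k F : Type) [Field k] [Field F] [Algebra k F] where
  Pt : Type
  genus : ℕ
  K : Pt →₀ ℤ
  RR : (Pt →₀ ℤ) → Submodule k F
  h0 : (Pt →₀ ℤ) → ℕ
  h0_eq : ∀ D, h0 D = Module.finrank k (RR D)
  fin : ∀ D, FiniteDimensional k (RR D)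
  mono : ∀ {D E : Pt →₀ ℤ}, D ≤ E → RR D ≤ RR E
  mul_le : ∀ D E : Pt →₀ ℤ, RR D * RR E ≤ RR (D + E)
  RR_zero : RR 0 = Submodule.span k {(1 : F)}
  inf_eq : ∀ D E : Pt →₀ ℤ, RR D ⊓ RR E = RR (D ⊓ E)
  h0_neg : ∀ D : Pt →₀ ℤ, divDeg D < 0 → h0 D = 0
  h0_degzero : ∀ D : Pt →₀ ℤ, divDeg D = 0 → h0 D ≤ 1
  riemann_roch : ∀ D : Pt →₀ ℤ, (h0 D : ℤ) - h0 (K - D) = divDeg D + 1 - genus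
  deg_K : divDeg K = 2 * (genus : ℤ) - 2

/-- `C` is hyperelliptic iff it carries a `g^1_2`, i.e. a divisor of degree `2` with
`h^0 ≥ 2` (equivalently, a degree-two map to `P^1`). -/
def SmoothProjCurve.Hyperelliptic {k F : Type} [Field k] [Field F] [Algebra k F]
    (C : SmoothProjCurve k F) : Prop :=
  ∃ D : C.Pt →₀ ℤ, divDeg D = 2 ∧ 2 ≤ C.h0 D

lemma divDeg_add' {Pt : Type} (A B : Pt →₀ ℤ) : divDeg (A + B) = divDeg A + divDeg B := by
  classical
  exact Finsupp.sum_add_index' (fun _ => rfl) (fun _ _ _ => rfl)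

lemma divDeg_zero' {Pt : Type} : divDeg (0 : Pt →₀ ℤ) = 0 := Finsupp.sum_zero_index

lemma divDeg_neg' {Pt : Type} (A : Pt →₀ ℤ) : divDeg (-A) = -divDeg A := by
  have := divDeg_add' A (-A)
  rw [add_neg_cancel, divDeg_zero'] at this
  linarith

lemma divDeg_single' {Pt : Type} (p : Pt) (n : ℤ) : divDeg (Finsupp.single p n) = n := by
  classical
  exact Finsupp.sum_single_index rfl

lemma divDeg_nsmul' {Pt : Type} (n : ℕ) (A : Pt →₀ ℤ) : divDeg (n • A) = n * divDeg A := by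
  induction n with
  | zero => simp [divDeg_zero']
  | succ m ih => rw [succ_nsmul, divDeg_add', ih]; push_cast; ring

/-- Powers `c * x ^ i` of a transcendental element, rescaled by a nonzero constant, are
linearly independent. -/
lemma indep_pows' {k F : Type} [Field k] [Field F] [Algebra k F]
    (x : F) (hx : Transcendental k x) (c : F) (hc : c ≠ 0) (n : ℕ) :
    LinearIndependent k (fun i : Fin n => c * x ^ (i : ℕ)) := by
  rw [transcendental_iff] at hx
  rw [Fintype.linearIndependent_iff]
  intro g hg i
  have hsum : (∑ j : Fin n, g j • x ^ (j : ℕ)) = 0 := by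
    have h1 : c * (∑ j : Fin n, g j • x ^ (j : ℕ)) = 0 := by
      rw [Finset.mul_sum]
      rw [← hg]
      exact Finset.sum_congr rfl fun j _ => (mul_smul_comm (g j) c (x ^ (j : ℕ)))
    rcases mul_eq_zero.1 h1 with h | h
    · exact absurd h hc
    · exact h
  have hp : (∑ j : Fin n, Polynomial.C (g j) * Polynomial.X ^ (j : ℕ)) = 0 := by
    apply hx
    rw [map_sum]
    rw [← hsum]
    refine Finset.sum_congr rfl fun j _ => ?_
    simp [Algebra.smul_def]
  have hco := congrArg (fun p => Polynomial.coeff p (i : ℕ)) hp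
  simp only [Polynomial.finset_sum_coeff, Polynomial.coeff_C_mul, Polynomial.coeff_X_pow,
    Polynomial.coeff_zero, mul_ite, mul_one, mul_zero] at hco
  rwa [Finset.sum_eq_single i (fun j _ hj => by
      exact if_neg (fun h : (i : ℕ) = (j : ℕ) => hj (Fin.ext h.symm)))
      (fun h => absurd (Finset.mem_univ i) h), if_pos rfl] at hco

/-- Over an algebraically closed base field, any non-transcendental element of a field
extension comes from the base field. -/
lemma alg_elt' {k F : Type} [Field k] [IsAlgClosed k] [Field F] [Algebra k F]
    (x : F) (h : ¬ Transcendental k x) : ∃ c : k, algebraMap k F c = x := by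
  rw [Transcendental, not_not] at h
  have hi : IsIntegral k x := h.isIntegral
  refine ⟨-(minpoly k x).coeff 0, ?_⟩
  have hq : (minpoly k x).leadingCoeff = 1 := minpoly.monic hi
  have hdeg : (minpoly k x).degree = 1 :=
    IsAlgClosed.degree_eq_one_of_irreducible k (minpoly.irreducible hi)
  have h0 : (Polynomial.aeval x) (minpoly k x) = 0 := minpoly.aeval k x
  rw [Polynomial.eq_X_add_C_of_degree_eq_one hdeg, hq, Polynomial.C_1, one_mul, map_add,
    Polynomial.aeval_X, Polynomial.aeval_C, add_eq_zero_iff_eq_neg] at h0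
  rw [map_neg, ← h0]

/-- Let `C` be a hyperelliptic smooth projective curve of genus `g ≥ 2` over an algebraically
closed field of characteristic `≠ 2`, `P ∈ C` a point and `D = K_C + P`. Then the cokernel of
the multiplication map `γ₁ : H^0(O_C(K_C)) ⊗ H^0(O_C(D)) → H^0(O_C(K_C + D))` has
dimension `g − 1`; i.e. `h^0(K_C + D) = dim (RR K_C · RR D) + (g − 1)`. -/
theorem stmt_7 (k F : Type) [Field k] [IsAlgClosed k] [Field F] [Algebra k F]
    (hch : ringChar k ≠ 2)
    (C : SmoothProjCurve k F) (hg : 2 ≤ C.genus) (hhyp : C.Hyperelliptic) (P : C.Pt) :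
    C.h0 (C.K + (C.K + Finsupp.single P 1)) =
      Module.finrank k ↥(C.RR C.K * C.RR (C.K + Finsupp.single P 1)) + (C.genus - 1) := by
  classical
  obtain ⟨D₂, hD₂deg, hD₂h0⟩ := hhyp
  set g := C.genus with hgdef
  have hfin : ∀ D, FiniteDimensional k (C.RR D) := C.fin
  haveI := hfin C.K
  haveI := hfin D₂
  -- `h0 0 = 1`
  have h0zero : C.h0 0 = 1 := by
    rw [C.h0_eq, C.RR_zero, finrank_span_singleton (one_ne_zero)]
  -- `h0 K = g`
  have hK0 : C.h0 C.K = g := by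
    have h := C.riemann_roch C.K
    rw [show C.K - C.K = (0 : C.Pt →₀ ℤ) from sub_self _, h0zero, C.deg_K] at h
    omega
  set P₁ := Finsupp.single P (1 : ℤ) with hP₁def
  have hP₁deg : divDeg P₁ = 1 := divDeg_single' P 1
  -- `h0 (K + P) = g`
  have hKP : C.h0 (C.K + P₁) = g := by
    have h := C.riemann_roch (C.K + P₁)
    have e : C.K - (C.K + P₁) = -P₁ := by abel
    have hneg : divDeg (-P₁) < 0 := by rw [divDeg_neg', hP₁deg]; norm_num
    rw [e, C.h0_neg _ hneg, divDeg_add', C.deg_K, hP₁deg] at h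
    omega
  -- `RR (K + P) = RR K`
  have hRRKP : C.RR (C.K + P₁) = C.RR C.K := by
    haveI := hfin (C.K + P₁)
    have hle : C.RR C.K ≤ C.RR (C.K + P₁) :=
      C.mono (le_add_of_nonneg_right (Finsupp.single_nonneg.2 one_pos.le))
    refine (Submodule.eq_of_le_of_finrank_le hle ?_).symm
    rw [← C.h0_eq, ← C.h0_eq, hK0, hKP]
  -- `h0 (2K + P) = 3g - 2`
  have h2KP : C.h0 (C.K + (C.K + P₁)) = 3 * g - 2 := by
    have h := C.riemann_roch (C.K + (C.K + P₁))
    have e : C.K - (C.K + (C.K + P₁)) = -(C.K + P₁) := by abel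
    have hneg : divDeg (-(C.K + P₁)) < 0 := by
      rw [divDeg_neg', divDeg_add', C.deg_K, hP₁deg]; omega
    rw [e, C.h0_neg _ hneg, divDeg_add', divDeg_add', C.deg_K, hP₁deg] at h
    omega
  -- pick two independent sections of the `g^1_2`
  have hRRD₂ne : C.RR D₂ ≠ ⊥ := by
    intro hbot
    rw [C.h0_eq, hbot, finrank_bot] at hD₂h0; omega
  obtain ⟨y₀, hy₀mem, hy₀ne⟩ := (Submodule.ne_bot_iff _).1 hRRD₂ne
  have hy₁ex : ∃ y₁ ∈ C.RR D₂, y₁ ∉ Submodule.span k {y₀} := by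
    by_contra hcon
    push_neg at hcon
    have hle : C.RR D₂ ≤ Submodule.span k {y₀} := hcon
    have h2 := Submodule.finrank_mono hle
    rw [finrank_span_singleton hy₀ne] at h2
    rw [C.h0_eq] at hD₂h0; omega
  obtain ⟨y₁, hy₁mem, hy₁ns⟩ := hy₁ex
  set x := y₁ * y₀⁻¹ with hxdef
  have hxt : Transcendental k x := by
    by_contra hnt
    obtain ⟨cc, hcc⟩ := alg_elt' x hnt
    apply hy₁ns
    rw [Submodule.mem_span_singleton]
    refine ⟨cc, ?_⟩
    rw [Algebra.smul_def, hcc, hxdef]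
    field_simp
  -- powers of sections lie in multiples of `D₂`
  have hpow : ∀ (y : F), y ∈ C.RR D₂ → ∀ a : ℕ, y ^ a ∈ C.RR (a • D₂) := by
    intro y hy a
    induction a with
    | zero =>
      rw [pow_zero, zero_smul, C.RR_zero]
      exact Submodule.mem_span_singleton_self 1
    | succ m ih =>
      rw [pow_succ, succ_nsmul]
      exact C.mul_le _ _ (Submodule.mul_mem_mul ih hy)
  have hmono : ∀ a b : ℕ, y₀ ^ a * y₁ ^ b ∈ C.RR ((a + b) • D₂) := by
    intro a b
    rw [add_nsmul]
    exact C.mul_le _ _ (Submodule.mul_mem_mul (hpow y₀ hy₀mem a) (hpow y₁ hy₁mem b))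
  have hxid : ∀ a j : ℕ, j ≤ a → y₀ ^ a * x ^ j = y₀ ^ (a - j) * y₁ ^ j := by
    intro a j hj
    have h1 : y₀ ^ a = y₀ ^ (a - j) * y₀ ^ j := by rw [← pow_add, Nat.sub_add_cancel hj]
    rw [hxdef, mul_pow, h1, inv_pow]
    field_simp
  -- `h0 ((g-1) • D₂) ≥ g`
  have hg1 : g ≤ C.h0 ((g - 1) • D₂) := by
    have hind := indep_pows' x hxt (y₀ ^ (g - 1)) (pow_ne_zero _ hy₀ne) g
    have hmem : ∀ j : Fin g, y₀ ^ (g - 1) * x ^ (j : ℕ) ∈ C.RR ((g - 1) • D₂) := by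
      intro j
      have hj : (j : ℕ) ≤ g - 1 := by have := j.isLt; omega
      rw [hxid (g - 1) (j : ℕ) hj]
      have h2 := hmono (g - 1 - (j : ℕ)) (j : ℕ)
      rwa [Nat.sub_add_cancel hj] at h2
    have hsple : Submodule.span k (Set.range fun j : Fin g => y₀ ^ (g - 1) * x ^ (j : ℕ))
        ≤ C.RR ((g - 1) • D₂) :=
      Submodule.span_le.2 (by rintro _ ⟨j, rfl⟩; exact hmem j)
    haveI := hfin ((g - 1) • D₂)
    have h2 := Submodule.finrank_mono hsple
    rw [finrank_span_eq_card hind, Fintype.card_fin] at h2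
    rw [C.h0_eq]; exact h2
  -- pick `0 ≠ u ∈ RR (K - (g-1) • D₂)`
  have hu : ∃ u, u ∈ C.RR (C.K - (g - 1) • D₂) ∧ u ≠ 0 := by
    have h := C.riemann_roch ((g - 1) • D₂)
    rw [divDeg_nsmul', hD₂deg] at h
    have hpos : 0 < C.h0 (C.K - (g - 1) • D₂) := by omega
    rw [C.h0_eq] at hpos
    haveI := hfin (C.K - (g - 1) • D₂)
    have hne : C.RR (C.K - (g - 1) • D₂) ≠ ⊥ := by
      intro hbot; rw [hbot, finrank_bot] at hpos; omega
    obtain ⟨u, hum, hune⟩ := (Submodule.ne_bot_iff _).1 hne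
    exact ⟨u, hum, hune⟩
  obtain ⟨u, hum, hune⟩ := hu
  set c := y₀ ^ (g - 1) * u with hcdef
  have hcne : c ≠ 0 := mul_ne_zero (pow_ne_zero _ hy₀ne) hune
  -- the family `c * x ^ j`, `j < g`, lies in `RR K` and spans it
  have hfmem : ∀ j : Fin g, c * x ^ (j : ℕ) ∈ C.RR C.K := by
    intro j
    have hj : (j : ℕ) ≤ g - 1 := by have := j.isLt; omega
    have e1 : c * x ^ (j : ℕ) = (y₀ ^ (g - 1 - (j : ℕ)) * y₁ ^ (j : ℕ)) * u := by
      rw [hcdef, mul_right_comm, hxid (g - 1) (j : ℕ) hj]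
    rw [e1]
    have hm1 : y₀ ^ (g - 1 - (j : ℕ)) * y₁ ^ (j : ℕ) ∈ C.RR ((g - 1) • D₂) := by
      have h2 := hmono (g - 1 - (j : ℕ)) (j : ℕ)
      rwa [Nat.sub_add_cancel hj] at h2
    have h3 := C.mul_le ((g - 1) • D₂) (C.K - (g - 1) • D₂) (Submodule.mul_mem_mul hm1 hum)
    have e2 : (g - 1) • D₂ + (C.K - (g - 1) • D₂) = C.K := by abel
    rwa [e2] at h3
  have hspan : Submodule.span k (Set.range fun j : Fin g => c * x ^ (j : ℕ)) = C.RR C.K := by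
    have hle : Submodule.span k (Set.range fun j : Fin g => c * x ^ (j : ℕ)) ≤ C.RR C.K :=
      Submodule.span_le.2 (by rintro _ ⟨j, rfl⟩; exact hfmem j)
    refine Submodule.eq_of_le_of_finrank_le hle ?_
    rw [finrank_span_eq_card (indep_pows' x hxt c hcne g), Fintype.card_fin, ← C.h0_eq, hK0]
  -- the product space
  have hmul : C.RR C.K * C.RR C.K
      = Submodule.span k (Set.range fun m : Fin (2 * g - 1) => c ^ 2 * x ^ (m : ℕ)) := by
    rw [← hspan, Submodule.span_mul_span]
    congr 1
    ext z
    constructor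
    · intro hz
      rw [Set.mem_mul] at hz
      obtain ⟨a, ⟨i, rfl⟩, b, ⟨j, rfl⟩, rfl⟩ := hz
      refine ⟨⟨(i : ℕ) + (j : ℕ), by have := i.isLt; have := j.isLt; omega⟩, ?_⟩
      show c ^ 2 * x ^ ((i : ℕ) + (j : ℕ)) = _
      rw [pow_add]; ring
    · rintro ⟨m, rfl⟩
      rw [Set.mem_mul]
      have hmlt := m.isLt
      refine ⟨c * x ^ (min (m : ℕ) (g - 1)),
        ⟨⟨min (m : ℕ) (g - 1), by omega⟩, rfl⟩,
        c * x ^ ((m : ℕ) - min (m : ℕ) (g - 1)),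
        ⟨⟨(m : ℕ) - min (m : ℕ) (g - 1), by omega⟩, rfl⟩, ?_⟩
      have hadd : min (m : ℕ) (g - 1) + ((m : ℕ) - min (m : ℕ) (g - 1)) = (m : ℕ) := by omega
      rw [show c * x ^ (min (m : ℕ) (g - 1)) * (c * x ^ ((m : ℕ) - min (m : ℕ) (g - 1)))
          = c ^ 2 * x ^ (min (m : ℕ) (g - 1) + ((m : ℕ) - min (m : ℕ) (g - 1))) from by
        rw [pow_add]; ring, hadd]
  have hdim : Module.finrank k ↥(C.RR C.K * C.RR C.K) = 2 * g - 1 := by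
    rw [hmul, finrank_span_eq_card (indep_pows' x hxt (c ^ 2) (pow_ne_zero 2 hcne) (2 * g - 1)),
      Fintype.card_fin]
  rw [hRRKP, hdim, h2KP]
  omega
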